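/- Let K ≥ 1 be an integer and δ ∈ (0, 1). Let (F_k)_{k≥1} be a filtration on a probability space and, for each k ∈ [K], let ε_k be an F_{k+1}-measurable real random variable with E[ε_k | F_k] = 0 and |ε_k| ≤ 1 almost surely, and set σ_k² = E[ε_k² | F_k]. Then with probability at least 1 − δ: for all k ∈ [K], Σ_{s=1}^{k} ε_s² ≤ 8·Σ_{s=1}^{k} σ_s² + 4·log(4K(log₂(K) + 2)/δ). -/

import Mathlib

open MeasureTheory Finset

private lemma aux_exp_le {x : ℝ} (h0 : 0 ≤ x) (h1 : x ≤ 1) :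
    Real.exp x ≤ 1 + (Real.exp 1 - 1) * x := by
  have h := convexOn_exp.2 (Set.mem_univ (0:ℝ)) (Set.mem_univ (1:ℝ))
    (by linarith : (0:ℝ) ≤ 1 - x) h0 (by ring)
  simp only [smul_eq_mul, mul_zero, mul_one, zero_add, Real.exp_zero] at h
  nlinarith [h]

private lemma aux_one_add_le {v : ℝ} (hv : 0 ≤ v) :
    1 + (Real.exp 1 - 1) * v ≤ Real.exp (8 * v) := by
  have h1 : Real.exp 1 < 3 := by
    have := Real.exp_one_lt_d9; linarith
  have h2 : 8 * v + 1 ≤ Real.exp (8 * v) := Real.add_one_le_exp _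
  nlinarith

private lemma aux_num (K : ℕ) (hK : 1 ≤ K) (δ : ℝ) (hδ0 : 0 < δ) (hδ1 : δ < 1) :
    (K : ℝ) * Real.exp (-(4 * Real.log (4 * K * (Real.logb 2 K + 2) / δ))) ≤ δ := by
  have hK1 : (1:ℝ) ≤ K := by exact_mod_cast hK
  have hL : (2:ℝ) ≤ Real.logb 2 K + 2 := by
    have := Real.logb_nonneg (by norm_num : (1:ℝ) < 2) hK1
    linarith
  set R : ℝ := 4 * K * (Real.logb 2 K + 2) / δ with hRdef
  have hRK : 8 * K ≤ δ * R := by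
    rw [hRdef]; field_simp; nlinarith
  have hR8 : 8 ≤ R := by nlinarith
  have hRpos : 0 < R := by linarith
  have hexp : Real.exp (-(4 * Real.log R)) = (R ^ 4)⁻¹ := by
    rw [show (4:ℝ) * Real.log R = Real.log (R ^ 4) by
      rw [Real.log_pow]; push_cast; ring]
    rw [Real.exp_neg, Real.exp_log (by positivity)]
  rw [hexp, mul_inv_le_iff₀ (by positivity)]
  have h1 : 8 * (K:ℝ) * 8 * 8 * 8 ≤ δ * R * R * R * R := by
    have h2 : δ * R * 8 ≤ δ * R * R := by nlinarith
    nlinarith [mul_le_mul hRK hR8 (by norm_num) (by nlinarith : (0:ℝ) ≤ δ * R)]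
  nlinarith

section Aux

variable {Ω : Type*} {m0 : MeasurableSpace Ω} (μ : Measure Ω) [IsProbabilityMeasure μ]
  (F : Filtration ℕ m0) (ε : ℕ → Ω → ℝ)

/-- The exponent process `S_k = ∑_{s=1}^k (ε_s² − 8 σ̄_s²)`. -/
private noncomputable def auxS (k : ℕ) (ω : Ω) : ℝ :=
  ∑ s ∈ Finset.Icc 1 k, (ε s ω ^ 2 - 8 * (μ[fun ω' => (ε s ω') ^ 2 | F s]) ω)

private lemma auxS_meas (k : ℕ)
    (hmeas : ∀ s ∈ Finset.Icc 1 k, StronglyMeasurable[F (s + 1)] (ε s)) :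
    StronglyMeasurable[F (k + 1)] (auxS μ F ε k) := by
  unfold auxS
  refine Finset.stronglyMeasurable_fun_sum _ fun s hs => ?_
  obtain ⟨hs1, hs2⟩ := Finset.mem_Icc.mp hs
  have h1 : StronglyMeasurable[F (k + 1)] (fun ω => ε s ω ^ 2) := by
    have h := (hmeas s hs).mono (F.mono (by omega : s + 1 ≤ k + 1))
    exact h.pow 2
  have h2 : StronglyMeasurable[F (k + 1)]
      (fun ω => 8 * (μ[fun ω' => (ε s ω') ^ 2 | F s]) ω) :=
    (stronglyMeasurable_condExp.mono (F.mono (by omega : s ≤ k + 1))).const_mul 8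
  exact h1.sub h2

private lemma aux_ae (k : ℕ)
    (hbdd : ∀ s ∈ Finset.Icc 1 k, ∀ᵐ ω ∂μ, |ε s ω| ≤ 1) :
    ∀ᵐ ω ∂μ, ∀ s ∈ Finset.Icc 1 k,
      |ε s ω| ≤ 1 ∧ 0 ≤ (μ[fun ω' => (ε s ω') ^ 2 | F s]) ω := by
  rw [ae_all_iff]
  intro s
  by_cases hs : s ∈ Finset.Icc 1 k
  · filter_upwards [hbdd s hs,
      condExp_nonneg (ae_of_all μ fun ω => sq_nonneg (ε s ω))] with ω h1 h2
    exact fun _ => ⟨h1, h2⟩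
  · exact ae_of_all _ fun ω hs' => absurd hs' hs

private lemma aux_int (k : ℕ)
    (hmeas : ∀ s ∈ Finset.Icc 1 k, StronglyMeasurable[F (s + 1)] (ε s))
    (hbdd : ∀ s ∈ Finset.Icc 1 k, ∀ᵐ ω ∂μ, |ε s ω| ≤ 1) :
    Integrable (fun ω => Real.exp (auxS μ F ε k ω)) μ := by
  have hsm : AEStronglyMeasurable (fun ω => Real.exp (auxS μ F ε k ω)) μ :=
    (Real.continuous_exp.comp_stronglyMeasurable
      ((auxS_meas μ F ε k hmeas).mono (F.le _))).aestronglyMeasurable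
  refine (integrable_const (Real.exp k)).mono' hsm ?_
  filter_upwards [aux_ae μ F ε k hbdd] with ω h
  have hS : auxS μ F ε k ω ≤ k := by
    calc auxS μ F ε k ω ≤ ∑ s ∈ Finset.Icc 1 k, (1:ℝ) := by
          refine Finset.sum_le_sum fun s hs => ?_
          obtain ⟨h1, h2⟩ := h s hs
          have := abs_le.mp h1
          nlinarith
      _ = k := by simp
  rw [Real.norm_eq_abs, abs_of_nonneg (Real.exp_pos _).le]
  exact Real.exp_le_exp.mpr hS

private lemma aux_key (k : ℕ)
    (hmeas : ∀ s ∈ Finset.Icc 1 k, StronglyMeasurable[F (s + 1)] (ε s))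
    (hcond : ∀ s ∈ Finset.Icc 1 k, μ[ε s | F s] =ᵐ[μ] 0)
    (hbdd : ∀ s ∈ Finset.Icc 1 k, ∀ᵐ ω ∂μ, |ε s ω| ≤ 1) :
    ∫ ω, Real.exp (auxS μ F ε k ω) ∂μ ≤ 1 := by
  induction k with
  | zero => simp [auxS]
  | succ k ih =>
    have hsub : Finset.Icc 1 k ⊆ Finset.Icc 1 (k + 1) := by
      intro s hs; simp only [Finset.mem_Icc] at *; omega
    have hmeas' := fun s hs => hmeas s (hsub hs)
    have hcond' := fun s hs => hcond s (hsub hs)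
    have hbdd' := fun s hs => hbdd s (hsub hs)
    have hIH := ih hmeas' hcond' hbdd'
    have hmem : k + 1 ∈ Finset.Icc 1 (k + 1) := by simp
    set sb : Ω → ℝ := μ[fun ω' => (ε (k+1) ω') ^ 2 | F (k+1)] with hsb
    set c : ℝ := Real.exp 1 - 1 with hc
    have hc0 : 0 ≤ c := by
      rw [hc]; nlinarith [Real.add_one_le_exp (1:ℝ)]
    set g : Ω → ℝ := fun ω => Real.exp (auxS μ F ε k ω - 8 * sb ω) with hgdef
    set h : Ω → ℝ := fun ω => Real.exp (ε (k+1) ω ^ 2) with hhdef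
    have hsplit : ∀ ω, auxS μ F ε (k+1) ω
        = auxS μ F ε k ω + (ε (k+1) ω ^ 2 - 8 * sb ω) :=
      fun ω => Finset.sum_Icc_succ_top (by omega) _
    have hgh : ∀ ω, Real.exp (auxS μ F ε (k+1) ω) = g ω * h ω := by
      intro ω
      rw [hsplit ω, hgdef, hhdef, ← Real.exp_add]
      congr 1; ring
    -- measurability/integrability facts
    have hεm : AEStronglyMeasurable (fun ω => ε (k+1) ω ^ 2) μ := by
      have hr := ((hmeas (k+1) hmem).mono (F.le _))
      exact (hr.pow 2 :
        StronglyMeasurable (fun ω => ε (k+1) ω ^ 2)).aestronglyMeasurable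
    have hε2_int : Integrable (fun ω => ε (k+1) ω ^ 2) μ := by
      refine (integrable_const (1:ℝ)).mono' hεm ?_
      filter_upwards [hbdd (k+1) hmem] with ω h1
      have := abs_le.mp h1
      rw [Real.norm_eq_abs, abs_of_nonneg (sq_nonneg _)]
      nlinarith
    have hh_int : Integrable h μ := by
      refine (integrable_const (Real.exp 1)).mono'
        (Real.continuous_exp.comp_aestronglyMeasurable hεm) ?_
      filter_upwards [hbdd (k+1) hmem] with ω h1
      have := abs_le.mp h1
      rw [Real.norm_eq_abs, abs_of_nonneg (Real.exp_pos _).le]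
      exact Real.exp_le_exp.mpr (by nlinarith)
    have hgh_int : Integrable (fun ω => g ω * h ω) μ :=
      (aux_int μ F ε (k+1) hmeas hbdd).congr (ae_of_all _ fun ω => (hgh ω))
    have hg_meas : StronglyMeasurable[F (k+1)] g := by
      refine Real.continuous_exp.comp_stronglyMeasurable ?_
      exact (auxS_meas μ F ε k hmeas').sub (stronglyMeasurable_condExp.const_mul 8)
    -- pull-out property
    have hpull : μ[fun ω => g ω * h ω | F (k+1)] =ᵐ[μ] fun ω => g ω * (μ[h | F (k+1)]) ω := by
      have := condExp_mul_of_stronglyMeasurable_left (μ := μ) hg_meas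
        (by exact hgh_int) hh_int
      exact this
    -- conditional MGF bound
    have hφ_int : Integrable (fun ω => 1 + c * ε (k+1) ω ^ 2) μ :=
      (integrable_const (1:ℝ)).add (hε2_int.const_mul c)
    have hφ_cond : μ[fun ω => 1 + c * ε (k+1) ω ^ 2 | F (k+1)]
        =ᵐ[μ] fun ω => 1 + c * sb ω := by
      have e1 : (fun ω => 1 + c * ε (k+1) ω ^ 2)
          = (fun _ => (1:ℝ)) + c • (fun ω => ε (k+1) ω ^ 2) := by
        funext ω; simp
      rw [e1]
      refine (condExp_add (integrable_const (1:ℝ))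
        ((hε2_int).smul c) (F (k+1))).trans ?_
      have h2 := condExp_smul (μ := μ) (m := F (k+1)) c (fun ω => ε (k+1) ω ^ 2)
      have h3 : μ[(fun _ : Ω => (1:ℝ)) | F (k+1)] = fun _ => (1:ℝ) :=
        condExp_const (F.le _) 1
      filter_upwards [h2] with ω hω
      simp only [Pi.add_apply, h3, hω, Pi.smul_apply, smul_eq_mul, hsb]
    have hcond_le : μ[h | F (k+1)] ≤ᵐ[μ] fun ω => 1 + c * sb ω := by
      have hle : h ≤ᵐ[μ] fun ω => 1 + c * ε (k+1) ω ^ 2 := by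
        filter_upwards [hbdd (k+1) hmem] with ω h1
        have hb := abs_le.mp h1
        exact aux_exp_le (sq_nonneg _) (by nlinarith)
      exact (condExp_mono hh_int hφ_int hle).trans hφ_cond.le
    -- a.e. domination: g * E[h|F] ≤ exp (auxS k)
    have hae_le : (fun ω => g ω * (μ[h | F (k+1)]) ω)
        ≤ᵐ[μ] fun ω => Real.exp (auxS μ F ε k ω) := by
      filter_upwards [hcond_le,
        condExp_nonneg (μ := μ) (m := F (k+1))
          (ae_of_all μ fun ω => sq_nonneg (ε (k+1) ω))] with ω h1 h2
      have hsb0 : 0 ≤ sb ω := h2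
      have step1 : g ω * (μ[h | F (k+1)]) ω ≤ g ω * (1 + c * sb ω) :=
        mul_le_mul_of_nonneg_left h1 (Real.exp_pos _).le
      have step2 : (1 : ℝ) + c * sb ω ≤ Real.exp (8 * sb ω) := aux_one_add_le hsb0
      calc g ω * (μ[h | F (k+1)]) ω ≤ g ω * (1 + c * sb ω) := step1
        _ ≤ g ω * Real.exp (8 * sb ω) :=
            mul_le_mul_of_nonneg_left step2 (Real.exp_pos _).le
        _ = Real.exp (auxS μ F ε k ω) := by
            rw [hgdef, ← Real.exp_add]; congr 1; ring
    calc ∫ ω, Real.exp (auxS μ F ε (k+1) ω) ∂μ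
        = ∫ ω, g ω * h ω ∂μ := by
          exact integral_congr_ae (ae_of_all _ fun ω => hgh ω)
      _ = ∫ ω, (μ[fun ω' => g ω' * h ω' | F (k+1)]) ω ∂μ :=
          (integral_condExp (F.le (k+1))).symm
      _ ≤ ∫ ω, Real.exp (auxS μ F ε k ω) ∂μ := by
          refine integral_mono_ae integrable_condExp
            (aux_int μ F ε k hmeas' hbdd') ?_
          filter_upwards [hpull, hae_le] with ω e1 e2
          rw [e1]; exact e2
      _ ≤ 1 := hIH

end Aux

theorem cumulative_variance_concentration
    {Ω : Type*} {m0 : MeasurableSpace Ω} (μ : Measure Ω) [IsProbabilityMeasure μ]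
    (K : ℕ) (hK : 1 ≤ K) (δ : ℝ) (hδ : δ ∈ Set.Ioo (0 : ℝ) 1)
    (F : Filtration ℕ m0)
    (ε : ℕ → Ω → ℝ)
    (hmeas : ∀ k ∈ Finset.Icc 1 K, StronglyMeasurable[F (k + 1)] (ε k))
    (hcond : ∀ k ∈ Finset.Icc 1 K, μ[ε k | F k] =ᵐ[μ] 0)
    (hbdd : ∀ k ∈ Finset.Icc 1 K, ∀ᵐ ω ∂μ, |ε k ω| ≤ 1)
    (σ2 : ℕ → Ω → ℝ)
    (hσ2 : ∀ k ∈ Finset.Icc 1 K, σ2 k =ᵐ[μ] μ[fun ω => (ε k ω) ^ 2 | F k]) :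
    ENNReal.ofReal (1 - δ) ≤
      μ {ω | ∀ k ∈ Finset.Icc 1 K,
        ∑ s ∈ Finset.Icc 1 k, (ε s ω) ^ 2 ≤
          8 * ∑ s ∈ Finset.Icc 1 k, σ2 s ω
            + 4 * Real.log (4 * K * (Real.logb 2 K + 2) / δ)} := by
  obtain ⟨hδ0, hδ1⟩ := hδ
  set t : ℝ := 4 * Real.log (4 * K * (Real.logb 2 K + 2) / δ) with ht
  have haeσ : ∀ᵐ ω ∂μ, ∀ s ∈ Finset.Icc 1 K,
      σ2 s ω = (μ[fun ω' => (ε s ω') ^ 2 | F s]) ω := by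
    rw [ae_all_iff]
    intro s
    by_cases hs : s ∈ Finset.Icc 1 K
    · filter_upwards [hσ2 s hs] with ω h; exact fun _ => h
    · exact ae_of_all _ fun ω hs' => absurd hs' hs
  set G : Set Ω := {ω | ∀ k ∈ Finset.Icc 1 K,
      ∑ s ∈ Finset.Icc 1 k, (ε s ω) ^ 2 ≤
        8 * ∑ s ∈ Finset.Icc 1 k, (μ[fun ω' => (ε s ω') ^ 2 | F s]) ω + t} with hG
  have hμeq : μ {ω | ∀ k ∈ Finset.Icc 1 K,
      ∑ s ∈ Finset.Icc 1 k, (ε s ω) ^ 2 ≤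
        8 * ∑ s ∈ Finset.Icc 1 k, σ2 s ω + t} = μ G := by
    apply measure_congr
    rw [Filter.eventuallyEq_set]
    filter_upwards [haeσ] with ω h
    have hsum : ∀ k ∈ Finset.Icc 1 K,
        ∑ s ∈ Finset.Icc 1 k, σ2 s ω
          = ∑ s ∈ Finset.Icc 1 k, (μ[fun ω' => (ε s ω') ^ 2 | F s]) ω := by
      intro k hk
      refine Finset.sum_congr rfl fun s hs => ?_
      refine h s ?_
      simp only [Finset.mem_Icc] at *
      omega
    constructor
    · intro hω k hk
      rw [← hsum k hk]
      exact hω k hk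
    · intro hω k hk
      rw [hsum k hk]
      exact hω k hk
  have hbadk : ∀ k ∈ Finset.Icc 1 K,
      μ {ω | Real.exp t ≤ Real.exp (auxS μ F ε k ω)} ≤ ENNReal.ofReal (Real.exp (-t)) := by
    intro k hk
    have hkK : k ≤ K := (Finset.mem_Icc.mp hk).2
    have hsubK : Finset.Icc 1 k ⊆ Finset.Icc 1 K := by
      intro s hs; simp only [Finset.mem_Icc] at *; omega
    have hmeas' := fun s hs => hmeas s (hsubK hs)
    have hcond' := fun s hs => hcond s (hsubK hs)
    have hbdd' := fun s hs => hbdd s (hsubK hs)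
    have hint := aux_int μ F ε k hmeas' hbdd'
    have hkey := aux_key μ F ε k hmeas' hcond' hbdd'
    have hm := mul_meas_ge_le_integral_of_nonneg
      (ae_of_all μ fun ω => (Real.exp_pos (auxS μ F ε k ω)).le) hint (Real.exp t)
    have h2 : (μ {ω | Real.exp t ≤ Real.exp (auxS μ F ε k ω)}).toReal
        ≤ Real.exp (-t) := by
      have h3 : Real.exp t * (μ {ω | Real.exp t ≤ Real.exp (auxS μ F ε k ω)}).toReal
          ≤ 1 := hm.trans hkey
      rw [Real.exp_neg, ← one_div, le_div_iff₀ (Real.exp_pos t)]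
      rw [mul_comm]
      exact h3
    rw [← ENNReal.ofReal_toReal (measure_ne_top μ _)]
    exact ENNReal.ofReal_le_ofReal h2
  have hGc : μ Gᶜ ≤ ENNReal.ofReal δ := by
    have hsub : Gᶜ ⊆ ⋃ k ∈ Finset.Icc 1 K,
        {ω | Real.exp t ≤ Real.exp (auxS μ F ε k ω)} := by
      intro ω hω
      simp only [hG, Set.mem_compl_iff, Set.mem_setOf_eq, not_forall] at hω
      obtain ⟨k, hk, hlt⟩ := hω
      have hlt' := lt_of_not_ge hlt
      refine Set.mem_biUnion hk ?_
      simp only [Set.mem_setOf_eq]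
      apply Real.exp_le_exp.mpr
      have hSval : auxS μ F ε k ω
          = ∑ s ∈ Finset.Icc 1 k, (ε s ω) ^ 2
            - 8 * ∑ s ∈ Finset.Icc 1 k, (μ[fun ω' => (ε s ω') ^ 2 | F s]) ω := by
        unfold auxS
        rw [Finset.sum_sub_distrib, Finset.mul_sum]
      rw [hSval]
      linarith
    calc μ Gᶜ ≤ μ (⋃ k ∈ Finset.Icc 1 K,
          {ω | Real.exp t ≤ Real.exp (auxS μ F ε k ω)}) := measure_mono hsub
      _ ≤ ∑ k ∈ Finset.Icc 1 K, μ {ω | Real.exp t ≤ Real.exp (auxS μ F ε k ω)} :=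
          measure_biUnion_finset_le _ _
      _ ≤ ∑ _k ∈ Finset.Icc 1 K, ENNReal.ofReal (Real.exp (-t)) :=
          Finset.sum_le_sum hbadk
      _ = (K : ENNReal) * ENNReal.ofReal (Real.exp (-t)) := by
          rw [Finset.sum_const, Nat.card_Icc]
          simp [nsmul_eq_mul]
      _ = ENNReal.ofReal ((K : ℝ) * Real.exp (-t)) := by
          rw [ENNReal.ofReal_mul (by positivity)]
          congr 1
          exact (ENNReal.ofReal_natCast K).symm
      _ ≤ ENNReal.ofReal δ :=
          ENNReal.ofReal_le_ofReal (by rw [ht]; exact aux_num K hK δ hδ0 hδ1)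
  rw [hμeq]
  have huniv : (1 : ENNReal) ≤ μ G + μ Gᶜ := by
    rw [← measure_univ (μ := μ), ← Set.union_compl_self G]
    exact measure_union_le _ _
  have h1δ : ENNReal.ofReal (1 - δ) = 1 - ENNReal.ofReal δ := by
    rw [ENNReal.ofReal_sub _ hδ0.le, ENNReal.ofReal_one]
  rw [h1δ]
  refine tsub_le_iff_right.mpr ?_
  calc (1 : ENNReal) ≤ μ G + μ Gᶜ := huniv
    _ ≤ μ G + ENNReal.ofReal δ := add_le_add le_rfl hGc
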